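/- If M and N are N-differentiable AV-modules over (A, V), then the AV-module M ⊗_A N (with V acting by the Leibniz rule η(m⊗n) = (ηm)⊗n + m⊗(ηn)) is 2N-differentiable; in particular the class of differentiable AV-modules is closed under tensor product over A. -/

import Mathlib

open TensorProduct

lemma vandermonde_regroup {G : Type*} [AddCommGroup G] (n : ℕ) (g : ℕ → G) :
    ∑ k ∈ Finset.range (2*n+1), ((2*n).choose k : ℤ) • g k
      = ∑ i ∈ Finset.range (n+1), ∑ j ∈ Finset.range (n+1),
          (((n.choose i : ℤ)) * (n.choose j : ℤ)) • g (i+j) := by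
  have hH : ∀ p : ℕ × ℕ, n < p.1 ∨ n < p.2 →
      (((n.choose p.1 : ℤ)) * (n.choose p.2 : ℤ)) • g (p.1 + p.2) = 0 := by
    rintro p (h | h) <;> simp [Nat.choose_eq_zero_of_lt h]
  have h1 : ∑ k ∈ Finset.range (2*n+1), ((2*n).choose k : ℤ) • g k
      = ∑ k ∈ Finset.range (2*n+1), ∑ p ∈ Finset.HasAntidiagonal.antidiagonal k,
          (((n.choose p.1 : ℤ)) * (n.choose p.2 : ℤ)) • g (p.1 + p.2) := by
    refine Finset.sum_congr rfl fun k _ => ?_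
    rw [two_mul, Nat.add_choose_eq]
    push_cast
    rw [Finset.sum_smul]
    refine Finset.sum_congr rfl fun p hp => ?_
    rw [Finset.HasAntidiagonal.mem_antidiagonal.mp hp]
  rw [h1]
  have hdisj : Set.PairwiseDisjoint ↑(Finset.range (2*n+1))
      (fun k => (Finset.HasAntidiagonal.antidiagonal k : Finset (ℕ×ℕ))) := by
    intro a _ b _ hab
    simp only [Finset.disjoint_left, Finset.HasAntidiagonal.mem_antidiagonal]
    intro p hpa hpb
    exact hab (hpa ▸ hpb.symm ▸ rfl)
  rw [← Finset.sum_biUnion hdisj]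
  have hsub1 : (Finset.range (2*n+1)).biUnion Finset.HasAntidiagonal.antidiagonal
      ⊆ Finset.range (2*n+1) ×ˢ Finset.range (2*n+1) := by
    intro p hp
    simp only [Finset.mem_biUnion, Finset.HasAntidiagonal.mem_antidiagonal, Finset.mem_range] at hp
    obtain ⟨k, hk, hpk⟩ := hp
    simp only [Finset.mem_product, Finset.mem_range]
    omega
  have hsub2 : Finset.range (n+1) ×ˢ Finset.range (n+1)
      ⊆ Finset.range (2*n+1) ×ˢ Finset.range (2*n+1) := by
    refine Finset.product_subset_product ?_ ?_ <;> exact Finset.range_subset_range.mpr (by omega)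
  rw [Finset.sum_subset hsub1, ← Finset.sum_product', Finset.sum_subset hsub2]
  · intro p hp hp2
    simp only [Finset.mem_product, Finset.mem_range] at hp hp2
    exact hH p (by omega)
  · intro p hp hp2
    simp only [Finset.mem_biUnion, Finset.HasAntidiagonal.mem_antidiagonal, Finset.mem_range,
      Finset.mem_product] at hp hp2
    have : 2*n < p.1 + p.2 := by
      by_contra h
      exact hp2 ⟨p.1 + p.2, by omega, rfl⟩
    exact hH p (by omega)

/-- If `M` and `N` are `N₀`-differentiable AV-modules over `(A, V)`, then the
AV-module `M ⊗_A N`, with `V` acting by the Leibniz rule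
`η(m⊗n) = (ηm)⊗n + m⊗(ηn)`, is `2N₀`-differentiable. -/
theorem tensor_of_differentiable_is_differentiable
    (K : Type*) [Field K] [CharZero K] (A : Type*) [CommRing A] [Algebra K A]
    (M N : Type*) [AddCommGroup M] [Module A M] [AddCommGroup N] [Module A N]
    (ρM : Derivation K A A → M → M) (ρN : Derivation K A A → N → N)
    -- `M` and `N` are AV-modules:
    (hMadd : ∀ η m m', ρM η (m + m') = ρM η m + ρM η m')
    (hNadd : ∀ η n n', ρN η (n + n') = ρN η n + ρN η n')
    (hMleib : ∀ (η : Derivation K A A) (f : A) (m : M),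
      ρM η (f • m) = η f • m + f • ρM η m)
    (hNleib : ∀ (η : Derivation K A A) (f : A) (n : N),
      ρN η (f • n) = η f • n + f • ρN η n)
    -- the diagonal (Leibniz-rule) action of `V` on `M ⊗_A N`:
    (τ : Derivation K A A → TensorProduct A M N → TensorProduct A M N)
    (hτadd : ∀ η t t', τ η (t + t') = τ η t + τ η t')
    (hτ : ∀ (η : Derivation K A A) (m : M) (n : N),
      τ η (m ⊗ₜ[A] n) = (ρM η m) ⊗ₜ[A] n + m ⊗ₜ[A] (ρN η n))
    (N₀ : ℕ)
    -- `M` and `N` are `N₀`-differentiable: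
    (hM : ∀ (f : A) (η : Derivation K A A) (m : M),
      ∑ k ∈ Finset.range (N₀ + 1),
        ((-1 : ℤ) ^ k * (N₀.choose k : ℤ)) • (f ^ k • ρM ((f ^ (N₀ - k)) • η) m) = 0)
    (hN : ∀ (f : A) (η : Derivation K A A) (n : N),
      ∑ k ∈ Finset.range (N₀ + 1),
        ((-1 : ℤ) ^ k * (N₀.choose k : ℤ)) • (f ^ k • ρN ((f ^ (N₀ - k)) • η) n) = 0) :
    -- then `M ⊗_A N` is `2N₀`-differentiable:
    ∀ (f : A) (η : Derivation K A A) (t : TensorProduct A M N),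
      ∑ k ∈ Finset.range (2 * N₀ + 1),
        ((-1 : ℤ) ^ k * ((2 * N₀).choose k : ℤ)) •
          (f ^ k • τ ((f ^ (2 * N₀ - k)) • η) t) = 0 := by
  intro f η t
  have hτ0 : ∀ η', τ η' (0 : TensorProduct A M N) = 0 := by
    intro η'
    have h := hτadd η' 0 0
    rw [add_zero] at h
    exact (left_eq_add.mp h)
  induction t using TensorProduct.induction_on with
  | zero => simp [hτ0]
  | add x y hx hy =>
      have : ∀ k, ((-1 : ℤ) ^ k * ((2 * N₀).choose k : ℤ)) •
            (f ^ k • τ ((f ^ (2 * N₀ - k)) • η) (x + y))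
          = ((-1 : ℤ) ^ k * ((2 * N₀).choose k : ℤ)) •
              (f ^ k • τ ((f ^ (2 * N₀ - k)) • η) x)
            + ((-1 : ℤ) ^ k * ((2 * N₀).choose k : ℤ)) •
              (f ^ k • τ ((f ^ (2 * N₀ - k)) • η) y) := by
        intro k
        rw [hτadd, smul_add, smul_add]
      rw [Finset.sum_congr rfl fun k _ => this k, Finset.sum_add_distrib, hx, hy, add_zero]
  | tmul m n =>
      set c : ℕ → ℤ := fun k => (-1 : ℤ) ^ k * (N₀.choose k : ℤ) with hc
      -- rewrite the goal into the form of `vandermonde_regroup`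
      have step1 : ∑ k ∈ Finset.range (2 * N₀ + 1),
            ((-1 : ℤ) ^ k * ((2 * N₀).choose k : ℤ)) •
              (f ^ k • τ ((f ^ (2 * N₀ - k)) • η) (m ⊗ₜ[A] n))
          = ∑ k ∈ Finset.range (2 * N₀ + 1), ((2 * N₀).choose k : ℤ) •
              ((-1 : ℤ) ^ k • (f ^ k • τ ((f ^ (2 * N₀ - k)) • η) (m ⊗ₜ[A] n))) := by
        refine Finset.sum_congr rfl fun k _ => ?_
        rw [mul_comm, mul_smul]
      rw [step1, vandermonde_regroup N₀
        (fun k => (-1 : ℤ) ^ k • (f ^ k • τ ((f ^ (2 * N₀ - k)) • η) (m ⊗ₜ[A] n)))]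
      -- expand each term into an M-part and an N-part
      have expand : ∀ i ∈ Finset.range (N₀ + 1), ∀ j ∈ Finset.range (N₀ + 1),
          ((N₀.choose i : ℤ) * (N₀.choose j : ℤ)) •
              ((-1 : ℤ) ^ (i+j) • (f ^ (i+j) • τ ((f ^ (2 * N₀ - (i+j))) • η) (m ⊗ₜ[A] n)))
            = c j • ((f ^ j • (c i • (f ^ i • ρM ((f ^ (N₀ - i)) • ((f ^ (N₀ - j)) • η)) m)))
                ⊗ₜ[A] n)
              + c i • (m ⊗ₜ[A]
                  (f ^ i • (c j • (f ^ j • ρN ((f ^ (N₀ - j)) • ((f ^ (N₀ - i)) • η)) n)))) := by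
        intro i hi j hj
        rw [Finset.mem_range] at hi hj
        have hθ : (f ^ (2 * N₀ - (i+j))) • η
            = (f ^ (N₀ - i)) • ((f ^ (N₀ - j)) • η) := by
          rw [← mul_smul, ← pow_add]
          congr 2
          omega
        have hθ' : (f ^ (2 * N₀ - (i+j))) • η
            = (f ^ (N₀ - j)) • ((f ^ (N₀ - i)) • η) := by
          rw [← mul_smul, ← pow_add]
          congr 2
          omega
        have hsc : ((N₀.choose i : ℤ) * (N₀.choose j : ℤ)) • ((-1 : ℤ) ^ (i+j) •
              (f ^ (i+j) • τ ((f ^ (2 * N₀ - (i+j))) • η) (m ⊗ₜ[A] n)))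
            = (c i * c j) • (f ^ (i+j) • τ ((f ^ (2 * N₀ - (i+j))) • η) (m ⊗ₜ[A] n)) := by
          rw [← mul_smul, hc]
          congr 1
          ring
        rw [hsc, hτ]
        rw [smul_add, smul_add]
        congr 1
        · -- M part
          nth_rewrite 1 [hθ]
          have : f ^ (i+j) • ((ρM ((f ^ (N₀ - i)) • ((f ^ (N₀ - j)) • η)) m) ⊗ₜ[A] n)
              = (f ^ j • (f ^ i • ρM ((f ^ (N₀ - i)) • ((f ^ (N₀ - j)) • η)) m)) ⊗ₜ[A] n := by
            rw [show i + j = j + i from add_comm i j, pow_add, mul_smul,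
              TensorProduct.smul_tmul', TensorProduct.smul_tmul']
          rw [this, show c i * c j = c j * c i from mul_comm _ _, mul_smul,
            TensorProduct.smul_tmul', smul_comm (c i) (f ^ j)]
        · -- N part
          nth_rewrite 1 [hθ']
          have : f ^ (i+j) • (m ⊗ₜ[A] ρN ((f ^ (N₀ - j)) • ((f ^ (N₀ - i)) • η)) n)
              = m ⊗ₜ[A] (f ^ i • (f ^ j • ρN ((f ^ (N₀ - j)) • ((f ^ (N₀ - i)) • η)) n)) := by
            rw [pow_add, mul_smul, ← TensorProduct.tmul_smul, ← TensorProduct.tmul_smul]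
          rw [this, mul_smul, ← TensorProduct.tmul_smul, ← TensorProduct.tmul_smul,
            smul_comm (c j) (f ^ i), TensorProduct.tmul_smul]
      rw [Finset.sum_congr rfl fun i hi => Finset.sum_congr rfl fun j hj => expand i hi j hj]
      rw [Finset.sum_congr rfl fun i _ => Finset.sum_add_distrib, Finset.sum_add_distrib]
      have hMpart : ∑ i ∈ Finset.range (N₀ + 1), ∑ j ∈ Finset.range (N₀ + 1),
          c j • ((f ^ j • (c i • (f ^ i • ρM ((f ^ (N₀ - i)) • ((f ^ (N₀ - j)) • η)) m)))
            ⊗ₜ[A] n) = 0 := by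
        rw [Finset.sum_comm]
        refine Finset.sum_eq_zero fun j _ => ?_
        rw [← Finset.smul_sum]
        have : ∑ i ∈ Finset.range (N₀ + 1),
            (f ^ j • (c i • (f ^ i • ρM ((f ^ (N₀ - i)) • ((f ^ (N₀ - j)) • η)) m))) ⊗ₜ[A] n
            = (f ^ j • ∑ i ∈ Finset.range (N₀ + 1),
                c i • (f ^ i • ρM ((f ^ (N₀ - i)) • ((f ^ (N₀ - j)) • η)) m)) ⊗ₜ[A] n := by
          rw [Finset.smul_sum, TensorProduct.sum_tmul]
        rw [this, hM f ((f ^ (N₀ - j)) • η) m, smul_zero, TensorProduct.zero_tmul, smul_zero]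
      have hNpart : ∑ i ∈ Finset.range (N₀ + 1), ∑ j ∈ Finset.range (N₀ + 1),
          c i • (m ⊗ₜ[A]
            (f ^ i • (c j • (f ^ j • ρN ((f ^ (N₀ - j)) • ((f ^ (N₀ - i)) • η)) n)))) = 0 := by
        refine Finset.sum_eq_zero fun i _ => ?_
        rw [← Finset.smul_sum]
        have : ∑ j ∈ Finset.range (N₀ + 1),
            m ⊗ₜ[A] (f ^ i • (c j • (f ^ j • ρN ((f ^ (N₀ - j)) • ((f ^ (N₀ - i)) • η)) n)))
            = m ⊗ₜ[A] (f ^ i • ∑ j ∈ Finset.range (N₀ + 1),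
                c j • (f ^ j • ρN ((f ^ (N₀ - j)) • ((f ^ (N₀ - i)) • η)) n)) := by
          rw [Finset.smul_sum, TensorProduct.tmul_sum]
        rw [this, hN f ((f ^ (N₀ - i)) • η) n, smul_zero, TensorProduct.tmul_zero, smul_zero]
      rw [hMpart, hNpart, add_zero]
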